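/- arXiv:1010.6121 — 2 statements merged into one kernel-verified Lean document; each statement's English description precedes it below -/
import Mathlib

section
/- Let ℒ_{t,T} : L²(D) → L²(D) be the adjoints of the transition operators ℒ*_{t,T}, satisfying the cocycle property ℒ_{θ,T} = ℒ_{θ,t}ℒ_{t,T} for θ ≤ t ≤ T, uniform norm bounds ‖ℒ_{θ,t}‖ ≤ c₀, and the continuity property that ((ℒ*_{θ,t} − I)ξ', ξ) → 0 and (ξ', (ℒ_{θ,t} − I)ξ) → 0 for bounded families as t − θ → 0⁺. Then for ζ ∈ L²(D), the function u(·,t) = ℒ_{t,T}ζ is weakly continuous in t and strongly left-continuous: ‖u(·,t) − u(·,θ)‖_{L²(D)} → 0 as θ → t⁻. -/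
open Set Filter Topology MeasureTheory

set_option maxHeartbeats 2000000 in
theorem stmt13 {n : ℕ} (D : Set (EuclideanSpace ℝ (Fin n)))
    (T c₀ : ℝ) (hT : 0 ≤ T)
    -- ℒ_{a,b} : the adjoints of the transition operators ℒ*_{a,b}
    (L Lstar : ℝ → ℝ → Lp ℝ 2 (volume.restrict D) →L[ℝ] Lp ℝ 2 (volume.restrict D))
    (hadj : ∀ a b : ℝ, ∀ ξ η : Lp ℝ 2 (volume.restrict D),
      (inner ℝ (L a b ξ) η : ℝ) = inner ℝ ξ (Lstar a b η))
    -- cocycle property ℒ_{θ,T} = ℒ_{θ,t} ℒ_{t,T}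
    (hcoc : ∀ θ t : ℝ, 0 ≤ θ → θ ≤ t → t ≤ T →
      L θ T = (L θ t).comp (L t T))
    -- uniform norm bounds
    (hbdL : ∀ a b : ℝ, 0 ≤ a → a ≤ b → b ≤ T → ‖L a b‖ ≤ c₀)
    (hbdLstar : ∀ a b : ℝ, 0 ≤ a → a ≤ b → b ≤ T → ‖Lstar a b‖ ≤ c₀)
    -- the continuity property for bounded families as t − θ → 0⁺
    (hweakLstar : ∀ u u' : ℝ → ℝ → Lp ℝ 2 (volume.restrict D), ∀ C : ℝ,
      (∀ a b, ‖u a b‖ ≤ C) → (∀ a b, ‖u' a b‖ ≤ C) →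
      ∀ δ > (0:ℝ), ∃ η > (0:ℝ), ∀ θ t : ℝ, 0 ≤ θ → θ ≤ t → t ≤ T → t - θ < η →
        |(inner ℝ (Lstar θ t (u θ t) - u θ t) (u' θ t) : ℝ)| < δ)
    (hweakL : ∀ u u' : ℝ → ℝ → Lp ℝ 2 (volume.restrict D), ∀ C : ℝ,
      (∀ a b, ‖u a b‖ ≤ C) → (∀ a b, ‖u' a b‖ ≤ C) →
      ∀ δ > (0:ℝ), ∃ η > (0:ℝ), ∀ θ t : ℝ, 0 ≤ θ → θ ≤ t → t ≤ T → t - θ < η →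
        |(inner ℝ (u' θ t) (L θ t (u θ t) - u θ t) : ℝ)| < δ)
    (ζ : Lp ℝ 2 (volume.restrict D)) :
    -- u(·,t) = ℒ_{t,T} ζ is weakly continuous in t …
    (∀ ξ : Lp ℝ 2 (volume.restrict D),
      ContinuousOn (fun t => (inner ℝ ξ (L t T ζ) : ℝ)) (Icc 0 T)) ∧
    -- … and strongly left-continuous
    (∀ t ∈ Ioc (0:ℝ) T,
      Tendsto (fun θ => ‖L t T ζ - L θ T ζ‖) (nhdsWithin t (Ico 0 t)) (nhds 0)) := by
  have hc0 : 0 ≤ c₀ := le_trans (norm_nonneg _) (hbdL 0 0 le_rfl le_rfl hT)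
  constructor
  · intro ξ t₀ ht₀
    rw [ContinuousWithinAt, Metric.tendsto_nhdsWithin_nhds]
    intro ε hε
    set u1 : ℝ → ℝ → Lp ℝ 2 (volume.restrict D) :=
      fun a b => if 0 ≤ a ∧ a ≤ b ∧ b ≤ T then L b T ζ else 0 with hu1
    have hbd1 : ∀ a b, ‖u1 a b‖ ≤ c₀ * ‖ζ‖ + ‖ξ‖ := by
      intro a b
      by_cases h : 0 ≤ a ∧ a ≤ b ∧ b ≤ T
      · simp only [hu1, if_pos h]
        have h1 := (L b T).le_opNorm ζ
        have hb : ‖L b T‖ ≤ c₀ := hbdL b T (le_trans h.1 h.2.1) h.2.2 le_rfl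
        nlinarith [norm_nonneg ξ, norm_nonneg ζ, norm_nonneg (L b T)]
      · simp only [hu1, if_neg h, norm_zero]
        positivity
    have hbd2 : ∀ (a b : ℝ), ‖(fun (_ _ : ℝ) => ξ) a b‖ ≤ c₀ * ‖ζ‖ + ‖ξ‖ := by
      intro a b
      have : 0 ≤ c₀ * ‖ζ‖ := by positivity
      simpa using by linarith
    obtain ⟨η, hη, hkey⟩ := hweakL u1 (fun _ _ => ξ) (c₀ * ‖ζ‖ + ‖ξ‖) hbd1 hbd2 ε hε
    refine ⟨η, hη, ?_⟩
    intro s hs hds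
    rw [Real.dist_eq] at hds ⊢
    rw [abs_sub_lt_iff] at hds
    rcases le_total s t₀ with hle | hle
    · have hcond : 0 ≤ s ∧ s ≤ t₀ ∧ t₀ ≤ T := ⟨hs.1, hle, ht₀.2⟩
      have key := hkey s t₀ hs.1 hle ht₀.2 hds.2
      have he : u1 s t₀ = L t₀ T ζ := if_pos hcond
      rw [he] at key
      have hc : L s t₀ (L t₀ T ζ) = L s T ζ := by
        rw [hcoc s t₀ hs.1 hle ht₀.2]; rfl
      rw [hc] at key
      calc |(inner ℝ ξ (L s T ζ) : ℝ) - inner ℝ ξ (L t₀ T ζ)|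
          = |(inner ℝ ξ (L s T ζ - L t₀ T ζ) : ℝ)| := by rw [inner_sub_right]
        _ < ε := key
    · have hcond : 0 ≤ t₀ ∧ t₀ ≤ s ∧ s ≤ T := ⟨ht₀.1, hle, hs.2⟩
      have key := hkey t₀ s ht₀.1 hle hs.2 hds.1
      have he : u1 t₀ s = L s T ζ := if_pos hcond
      rw [he] at key
      have hc : L t₀ s (L s T ζ) = L t₀ T ζ := by
        rw [hcoc t₀ s ht₀.1 hle hs.2]; rfl
      rw [hc] at key
      calc |(inner ℝ ξ (L s T ζ) : ℝ) - inner ℝ ξ (L t₀ T ζ)|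
          = |(inner ℝ ξ (L t₀ T ζ) : ℝ) - inner ℝ ξ (L s T ζ)| := abs_sub_comm _ _
        _ = |(inner ℝ ξ (L t₀ T ζ - L s T ζ) : ℝ)| := by rw [inner_sub_right]
        _ < ε := key
  · intro t ht
    rw [Metric.tendsto_nhdsWithin_nhds]
    intro ε hε
    set w : Lp ℝ 2 (volume.restrict D) := L t T ζ with hw
    have hwnorm : ‖w‖ ≤ c₀ * ‖ζ‖ :=
      le_trans ((L t T).le_opNorm ζ)
        (mul_le_mul_of_nonneg_right (hbdL t T ht.1.le ht.2 le_rfl) (norm_nonneg ζ))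
    set C : ℝ := (c₀ + 1) * (c₀ * ‖ζ‖) with hC
    have hCnn : 0 ≤ c₀ * ‖ζ‖ := by positivity
    set u2 : ℝ → ℝ → Lp ℝ 2 (volume.restrict D) :=
      fun a b => if 0 ≤ a ∧ a ≤ b ∧ b ≤ T then L a b w - w else 0 with hu2
    have hbd1 : ∀ a b, ‖u2 a b‖ ≤ C := by
      intro a b
      by_cases h : 0 ≤ a ∧ a ≤ b ∧ b ≤ T
      · simp only [hu2, if_pos h]
        have h1 : ‖L a b w - w‖ ≤ ‖L a b w‖ + ‖w‖ := norm_sub_le _ _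
        have h2 := (L a b).le_opNorm w
        have hb : ‖L a b‖ ≤ c₀ := hbdL a b h.1 h.2.1 h.2.2
        have h3 : ‖L a b w‖ ≤ c₀ * ‖w‖ :=
          le_trans h2 (mul_le_mul_of_nonneg_right hb (norm_nonneg w))
        have hwn := norm_nonneg w
        nlinarith
      · simp only [hu2, if_neg h, norm_zero]
        nlinarith
    have hbd2 : ∀ (a b : ℝ), ‖(fun (_ _ : ℝ) => w) a b‖ ≤ C := by
      intro a b
      simp only
      nlinarith [norm_nonneg w]
    obtain ⟨η, hη, hkey⟩ := hweakLstar u2 (fun _ _ => w) C hbd1 hbd2 (ε ^ 2) (by positivity)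
    refine ⟨η, hη, ?_⟩
    intro θ hθ hdθ
    rw [Real.dist_eq, abs_sub_lt_iff] at hdθ
    have hθt : θ ≤ t := hθ.2.le
    have key := hkey θ t hθ.1 hθt ht.2 hdθ.2
    have hcond : 0 ≤ θ ∧ θ ≤ t ∧ t ≤ T := ⟨hθ.1, hθt, ht.2⟩
    have he : u2 θ t = L θ t w - w := if_pos hcond
    rw [he] at key
    set d : Lp ℝ 2 (volume.restrict D) := L θ t w - w with hd
    clear_value d
    have hc : L θ T ζ = L θ t w := by
      rw [hcoc θ t hθ.1 hθt ht.2]; rfl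
    have hid : ‖L t T ζ - L θ T ζ‖ ^ 2 = (inner ℝ (Lstar θ t d - d) w : ℝ) := by
      have h1 : L t T ζ - L θ T ζ = -d := by
        rw [hc, hd, ← hw]; abel
      rw [h1, norm_neg, ← real_inner_self_eq_norm_sq]
      calc (inner ℝ d d : ℝ) = inner ℝ (L θ t w) d - inner ℝ w d := by
            rw [hd]; rw [inner_sub_left]
        _ = (inner ℝ w (Lstar θ t d) : ℝ) - inner ℝ w d := by rw [hadj]
        _ = (inner ℝ w (Lstar θ t d - d) : ℝ) := by rw [inner_sub_right]
        _ = (inner ℝ (Lstar θ t d - d) w : ℝ) := real_inner_comm _ _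
    have hnn : (0 : ℝ) ≤ ‖L t T ζ - L θ T ζ‖ ^ 2 := by positivity
    have hlt : ‖L t T ζ - L θ T ζ‖ ^ 2 < ε ^ 2 := by
      rw [hid]
      calc (inner ℝ (Lstar θ t d - d) w : ℝ) ≤ |(inner ℝ (Lstar θ t d - d) w : ℝ)| := le_abs_self _
        _ < ε ^ 2 := key
    have : ‖L t T ζ - L θ T ζ‖ < ε := lt_of_pow_lt_pow_left₀ 2 hε.le hlt
    rw [Real.dist_eq, sub_zero, abs_of_nonneg (norm_nonneg _)]
    exact this
end

section
/- Let two families of bounded operators ℒ_{s,t}, ℒ*_{s,t} on L²(D) be mutually adjoint, satisfy the cocycle identities ℒ*_{s,t} = ℒ*_{θ,t}ℒ*_{s,θ} (s ≤ θ ≤ t), uniform bounds ‖ℒ_{s,t}‖, ‖ℒ*_{s,t}‖ ≤ c₀, and the property that for every ξ ∈ L²(D) and every bounded family {u_{θ,t}} one has (ξ, (ℒ*_{θ,t} − I)u_{θ,t}) → 0 and ((ℒ_{θ,t} − I)u_{θ,t}, ξ) → 0 as t − θ → 0⁺. Let φ ∈ L¹([0,T] → L²(D)) and v(·,s) defined by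 (v(·,s), ρ) = ∫ₛᵀ (φ(·,r), ℒ*_{s,r}ρ) dr. Then s ↦ v(·,s) is weakly continuous and strongly left-continuous in L²(D). -/
open Set Filter Topology MeasureTheory

set_option maxHeartbeats 2000000
set_option synthInstance.maxHeartbeats 400000

theorem stmt19 {n : ℕ} (D : Set (EuclideanSpace ℝ (Fin n)))
    (T c₀ : ℝ) (hT : 0 ≤ T)
    (L Lstar : ℝ → ℝ → Lp ℝ 2 (volume.restrict D) →L[ℝ] Lp ℝ 2 (volume.restrict D))
    -- mutual adjointness
    (hadj : ∀ a b : ℝ, ∀ ξ η : Lp ℝ 2 (volume.restrict D),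
      (inner ℝ (L a b ξ) η : ℝ) = inner ℝ ξ (Lstar a b η))
    -- cocycle identity ℒ*_{s,t} = ℒ*_{θ,t} ℒ*_{s,θ}
    (hcoc : ∀ a θ b : ℝ, 0 ≤ a → a ≤ θ → θ ≤ b → b ≤ T →
      Lstar a b = (Lstar θ b).comp (Lstar a θ))
    -- uniform bounds
    (hbdL : ∀ a b : ℝ, 0 ≤ a → a ≤ b → b ≤ T → ‖L a b‖ ≤ c₀)
    (hbdLstar : ∀ a b : ℝ, 0 ≤ a → a ≤ b → b ≤ T → ‖Lstar a b‖ ≤ c₀)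
    -- weak continuity over bounded families as t − θ → 0⁺
    (hweakLstar : ∀ u u' : ℝ → ℝ → Lp ℝ 2 (volume.restrict D), ∀ C : ℝ,
      (∀ a b, ‖u a b‖ ≤ C) → (∀ a b, ‖u' a b‖ ≤ C) →
      ∀ δ > (0:ℝ), ∃ η > (0:ℝ), ∀ θ t : ℝ, 0 ≤ θ → θ ≤ t → t ≤ T → t - θ < η →
        |(inner ℝ (u' θ t) (Lstar θ t (u θ t) - u θ t) : ℝ)| < δ)
    (hweakL : ∀ u u' : ℝ → ℝ → Lp ℝ 2 (volume.restrict D), ∀ C : ℝ,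
      (∀ a b, ‖u a b‖ ≤ C) → (∀ a b, ‖u' a b‖ ≤ C) →
      ∀ δ > (0:ℝ), ∃ η > (0:ℝ), ∀ θ t : ℝ, 0 ≤ θ → θ ≤ t → t ≤ T → t - θ < η →
        |(inner ℝ (L θ t (u θ t) - u θ t) (u' θ t) : ℝ)| < δ)
    -- φ ∈ L¹([0,T] → L²(D))
    (φ : ℝ → Lp ℝ 2 (volume.restrict D))
    (hφ_meas : AEStronglyMeasurable φ (volume.restrict (Icc 0 T)))
    (hφ_int : IntervalIntegrable (fun t => ‖φ t‖) volume 0 T)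
    -- v(·,s) is defined by duality
    (v : ℝ → Lp ℝ 2 (volume.restrict D))
    (hv : ∀ s ∈ Icc (0:ℝ) T, ∀ ρ : Lp ℝ 2 (volume.restrict D),
      (inner ℝ (v s) ρ : ℝ) = ∫ r in s..T, (inner ℝ (φ r) (Lstar s r ρ) : ℝ)) :
    -- s ↦ v(·,s) is weakly continuous on [0,T] …
    (∀ ξ : Lp ℝ 2 (volume.restrict D),
      ContinuousOn (fun s => (inner ℝ ξ (v s) : ℝ)) (Icc 0 T)) ∧
    -- … and strongly left-continuous in L²(D)
    (∀ t ∈ Ioc (0:ℝ) T,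
      Tendsto (fun θ => ‖v t - v θ‖) (nhdsWithin t (Ico 0 t)) (nhds 0)) := by
  classical
  have hc₀ : 0 ≤ c₀ := le_trans (norm_nonneg _) (hbdLstar 0 0 le_rfl le_rfl hT)
  set M : ℝ := ∫ r in (0:ℝ)..T, ‖φ r‖ with hM_def
  have hM : 0 ≤ M :=
    intervalIntegral.integral_nonneg hT fun _ _ => norm_nonneg _
  -- integrability of ‖φ‖ on subintervals
  have hφ_sub : ∀ a b : ℝ, 0 ≤ a → a ≤ b → b ≤ T →
      IntervalIntegrable (fun r => ‖φ r‖) volume a b := by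
    intro a b ha hab hbT
    refine hφ_int.mono_set ?_
    rw [uIcc_of_le hab, uIcc_of_le hT]
    exact Icc_subset_Icc ha hbT
  -- operator norm bound pointwise
  have hLbd : ∀ a b : ℝ, 0 ≤ a → a ≤ b → b ≤ T →
      ∀ x : Lp ℝ 2 (volume.restrict D), ‖Lstar a b x‖ ≤ c₀ * ‖x‖ := by
    intro a b ha hab hbT x
    exact le_trans ((Lstar a b).le_opNorm x)
      (mul_le_mul_of_nonneg_right (hbdLstar a b ha hab hbT) (norm_nonneg _))
  -- KEY: the weak hypothesis upgrades to uniform strong convergence over bounded families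
  have key : ∀ (u : ℝ → ℝ → Lp ℝ 2 (volume.restrict D)) (C : ℝ),
      (∀ a b, ‖u a b‖ ≤ C) →
      ∀ δ : ℝ, 0 < δ → ∃ η > (0:ℝ), ∀ θ t : ℝ, 0 ≤ θ → θ ≤ t → t ≤ T → t - θ < η →
        ‖Lstar θ t (u θ t) - u θ t‖ < δ := by
    intro u C hu δ hδ
    have hC : 0 ≤ C := le_trans (norm_nonneg _) (hu 0 0)
    set u' : ℝ → ℝ → Lp ℝ 2 (volume.restrict D) :=
      fun a b => if 0 ≤ a ∧ a ≤ b ∧ b ≤ T then Lstar a b (u a b) - u a b else 0 with hu'_def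
    have hu'bd : ∀ a b, ‖u' a b‖ ≤ (c₀ + 1) * C := by
      intro a b
      by_cases h : 0 ≤ a ∧ a ≤ b ∧ b ≤ T
      · rw [show u' a b = Lstar a b (u a b) - u a b from if_pos h]
        calc ‖Lstar a b (u a b) - u a b‖ ≤ ‖Lstar a b (u a b)‖ + ‖u a b‖ := norm_sub_le _ _
          _ ≤ c₀ * C + C := by
              refine add_le_add (le_trans (hLbd a b h.1 h.2.1 h.2.2 _) ?_) (hu a b)
              exact mul_le_mul_of_nonneg_left (hu a b) hc₀
          _ = (c₀ + 1) * C := by ring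
      · rw [show u' a b = (0 : Lp ℝ 2 (volume.restrict D)) from if_neg h, norm_zero]
        positivity
    have hubd : ∀ a b, ‖u a b‖ ≤ (c₀ + 1) * C := by
      intro a b
      refine le_trans (hu a b) ?_
      nlinarith
    obtain ⟨η, hη, H⟩ := hweakLstar u u' ((c₀ + 1) * C) hubd hu'bd (δ ^ 2) (by positivity)
    refine ⟨η, hη, ?_⟩
    intro θ t h0 hθt htT hlt
    have h1 := H θ t h0 hθt htT hlt
    have h2 : u' θ t = Lstar θ t (u θ t) - u θ t := if_pos ⟨h0, hθt, htT⟩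
    rw [h2, real_inner_self_eq_norm_sq, abs_of_nonneg (sq_nonneg _)] at h1
    nlinarith [norm_nonneg (Lstar θ t (u θ t) - u θ t)]
  -- uniform continuity of r ↦ Lstar s r ρ
  have UC : ∀ (s : ℝ) (ρ : Lp ℝ 2 (volume.restrict D)), 0 ≤ s →
      ∀ δ : ℝ, 0 < δ → ∃ η > (0:ℝ), ∀ a b : ℝ, s ≤ a → a ≤ b → b ≤ T → b - a < η →
        ‖Lstar s b ρ - Lstar s a ρ‖ < δ := by
    intro s ρ hs δ hδ
    set u : ℝ → ℝ → Lp ℝ 2 (volume.restrict D) :=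
      fun a _ => if s ≤ a ∧ a ≤ T then Lstar s a ρ else 0 with hu_def
    have hu : ∀ a b, ‖u a b‖ ≤ c₀ * ‖ρ‖ := by
      intro a b
      by_cases h : s ≤ a ∧ a ≤ T
      · rw [show u a b = Lstar s a ρ from if_pos h]
        exact hLbd s a hs h.1 h.2 ρ
      · rw [show u a b = (0 : Lp ℝ 2 (volume.restrict D)) from if_neg h, norm_zero]
        positivity
    obtain ⟨η, hη, H⟩ := key u (c₀ * ‖ρ‖) hu δ hδ
    refine ⟨η, hη, ?_⟩
    intro a b hsa hab hbT hlt
    have h0a : 0 ≤ a := hs.trans hsa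
    have hax : u a b = Lstar s a ρ := if_pos ⟨hsa, hab.trans hbT⟩
    have h1 := H a b h0a hab hbT hlt
    rw [hax] at h1
    have h2 : Lstar a b (Lstar s a ρ) = Lstar s b ρ := by
      rw [hcoc s a b hs hsa hab hbT]; rfl
    rwa [h2] at h1
  have hcont : ∀ (s : ℝ) (ρ : Lp ℝ 2 (volume.restrict D)), 0 ≤ s →
      ContinuousOn (fun r => Lstar s r ρ) (Icc s T) := by
    intro s ρ hs
    rw [Metric.continuousOn_iff]
    intro r₀ hr₀ ε hε
    obtain ⟨η, hη, H⟩ := UC s ρ hs ε hε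
    refine ⟨η, hη, ?_⟩
    intro r hr hd
    rw [Real.dist_eq] at hd
    have hd' := abs_lt.mp hd
    rw [dist_eq_norm]
    rcases le_total r r₀ with h | h
    · have := H r r₀ hr.1 h hr₀.2 (by linarith)
      rwa [norm_sub_rev] at this
    · exact H r₀ r hr₀.1 h hr.2 (by linarith)
  -- integrability of the dual integrand
  have hInt : ∀ (s a b : ℝ) (ρ : Lp ℝ 2 (volume.restrict D)),
      0 ≤ s → s ≤ a → a ≤ b → b ≤ T →
      IntervalIntegrable (fun r => (inner ℝ (φ r) (Lstar s r ρ) : ℝ)) volume a b := by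
    intro s a b ρ hs hsa hab hbT
    rw [intervalIntegrable_iff_integrableOn_Ioc_of_le hab]
    have hsub : Ioc a b ⊆ Icc 0 T := fun x hx =>
      ⟨le_trans (hs.trans hsa) hx.1.le, hx.2.trans hbT⟩
    have hsub' : Ioc a b ⊆ Icc s T := fun x hx => ⟨hsa.trans hx.1.le, hx.2.trans hbT⟩
    have hφm : AEStronglyMeasurable φ (volume.restrict (Ioc a b)) :=
      hφ_meas.mono_measure (Measure.restrict_mono hsub le_rfl)
    have hgm : AEStronglyMeasurable (fun r => Lstar s r ρ) (volume.restrict (Ioc a b)) :=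
      (((hcont s ρ hs).mono hsub').aestronglyMeasurable measurableSet_Ioc)
    have hm : AEStronglyMeasurable (fun r => (inner ℝ (φ r) (Lstar s r ρ) : ℝ))
        (volume.restrict (Ioc a b)) := hφm.inner hgm
    have hgint : IntegrableOn (fun r => ‖φ r‖ * (c₀ * ‖ρ‖)) (Ioc a b) volume := by
      have := (intervalIntegrable_iff_integrableOn_Ioc_of_le hab).mp
        (hφ_sub a b (hs.trans hsa) hab hbT)
      exact this.mul_const _
    refine Integrable.mono' hgint hm ?_
    refine (ae_restrict_iff' measurableSet_Ioc).mpr (ae_of_all _ ?_)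
    intro r hr
    rw [Real.norm_eq_abs]
    refine le_trans (abs_real_inner_le_norm _ _) ?_
    exact mul_le_mul_of_nonneg_left
      (hLbd s r hs (hsa.trans hr.1.le) (hr.2.trans hbT) ρ) (norm_nonneg _)
  -- norm bound on v
  have hvnorm : ∀ s ∈ Icc (0:ℝ) T, ‖v s‖ ≤ c₀ * M := by
    intro s hs
    have h1 := hv s hs (v s)
    rw [real_inner_self_eq_norm_sq] at h1
    have hb : ‖∫ r in s..T, (inner ℝ (φ r) (Lstar s r (v s)) : ℝ)‖ ≤
        |∫ r in s..T, c₀ * ‖v s‖ * ‖φ r‖| := by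
      refine intervalIntegral.norm_integral_le_abs_of_norm_le ?_ ?_
      · rw [uIoc_of_le hs.2]
        refine (ae_restrict_iff' measurableSet_Ioc).mpr (ae_of_all _ ?_)
        intro r hr
        rw [Real.norm_eq_abs]
        refine le_trans (abs_real_inner_le_norm _ _) ?_
        calc ‖φ r‖ * ‖Lstar s r (v s)‖ ≤ ‖φ r‖ * (c₀ * ‖v s‖) :=
              mul_le_mul_of_nonneg_left
                (hLbd s r hs.1 hr.1.le (hr.2.trans le_rfl) (v s)) (norm_nonneg _)
          _ = c₀ * ‖v s‖ * ‖φ r‖ := by ring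
      · exact (hφ_sub s T hs.1 hs.2 le_rfl).const_mul _
    rw [intervalIntegral.integral_const_mul] at hb
    have hsT : (∫ r in s..T, ‖φ r‖) ≤ M := by
      have hadd := intervalIntegral.integral_add_adjacent_intervals
        (hφ_sub 0 s le_rfl hs.1 hs.2) (hφ_sub s T hs.1 hs.2 le_rfl)
      have h0s : 0 ≤ ∫ r in (0:ℝ)..s, ‖φ r‖ :=
        intervalIntegral.integral_nonneg hs.1 fun _ _ => norm_nonneg _
      rw [hM_def]; linarith
    have hφsT : 0 ≤ ∫ r in s..T, ‖φ r‖ :=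
      intervalIntegral.integral_nonneg hs.2 fun _ _ => norm_nonneg _
    have h2 : ‖v s‖ ^ 2 ≤ c₀ * ‖v s‖ * M := by
      rw [h1]
      refine le_trans (le_abs_self _) ?_
      rw [← Real.norm_eq_abs]
      refine le_trans hb ?_
      rw [abs_of_nonneg (by positivity)]
      have : c₀ * ‖v s‖ * (∫ r in s..T, ‖φ r‖) ≤ c₀ * ‖v s‖ * M :=
        mul_le_mul_of_nonneg_left hsT (by positivity)
      exact this
    nlinarith [norm_nonneg (v s), mul_nonneg hc₀ hM]
  -- the key decomposition bound
  have hkey : ∀ (θ t : ℝ) (ρ : Lp ℝ 2 (volume.restrict D)), 0 ≤ θ → θ ≤ t → t ≤ T →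
      |(inner ℝ (v t - v θ) ρ : ℝ)| ≤
        ‖v t‖ * ‖ρ - Lstar θ t ρ‖ + c₀ * ‖ρ‖ * ∫ r in θ..t, ‖φ r‖ := by
    intro θ t ρ h0 hθt htT
    have hθT : θ ≤ T := hθt.trans htT
    have h0t : 0 ≤ t := h0.trans hθt
    have e1 : (inner ℝ (v θ) ρ : ℝ) = ∫ r in θ..T, (inner ℝ (φ r) (Lstar θ r ρ) : ℝ) :=
      hv θ ⟨h0, hθT⟩ ρ
    have e2 : (inner ℝ (v t) (Lstar θ t ρ) : ℝ) =
        ∫ r in t..T, (inner ℝ (φ r) (Lstar θ r ρ) : ℝ) := by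
      rw [hv t ⟨h0t, htT⟩ (Lstar θ t ρ)]
      refine intervalIntegral.integral_congr ?_
      intro r hr
      rw [uIcc_of_le htT] at hr
      show (inner ℝ (φ r) (Lstar t r (Lstar θ t ρ)) : ℝ) = inner ℝ (φ r) (Lstar θ r ρ)
      rw [hcoc θ t r h0 hθt hr.1 hr.2]
      rfl
    have e3 := intervalIntegral.integral_add_adjacent_intervals
      (hInt θ θ t ρ h0 le_rfl hθt htT) (hInt θ t T ρ h0 hθt htT le_rfl)
    have e4 : (inner ℝ (v t - v θ) ρ : ℝ) =
        (inner ℝ (v t) (ρ - Lstar θ t ρ) : ℝ) -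
          ∫ r in θ..t, (inner ℝ (φ r) (Lstar θ r ρ) : ℝ) := by
      rw [inner_sub_left, inner_sub_right, e1, e2]
      linarith
    rw [e4]
    refine le_trans (abs_sub _ _) ?_
    refine add_le_add (abs_real_inner_le_norm _ _) ?_
    have hb : ‖∫ r in θ..t, (inner ℝ (φ r) (Lstar θ r ρ) : ℝ)‖ ≤
        |∫ r in θ..t, c₀ * ‖ρ‖ * ‖φ r‖| := by
      refine intervalIntegral.norm_integral_le_abs_of_norm_le ?_ ?_
      · rw [uIoc_of_le hθt]
        refine (ae_restrict_iff' measurableSet_Ioc).mpr (ae_of_all _ ?_)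
        intro r hr
        rw [Real.norm_eq_abs]
        refine le_trans (abs_real_inner_le_norm _ _) ?_
        calc ‖φ r‖ * ‖Lstar θ r ρ‖ ≤ ‖φ r‖ * (c₀ * ‖ρ‖) :=
              mul_le_mul_of_nonneg_left
                (hLbd θ r h0 hr.1.le (hr.2.trans htT) ρ) (norm_nonneg _)
          _ = c₀ * ‖ρ‖ * ‖φ r‖ := by ring
      · exact (hφ_sub θ t h0 hθt htT).const_mul _
    rw [intervalIntegral.integral_const_mul] at hb
    rw [Real.norm_eq_abs] at hb
    refine le_trans hb ?_
    rw [abs_of_nonneg]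
    have : 0 ≤ ∫ r in θ..t, ‖φ r‖ :=
      intervalIntegral.integral_nonneg hθt fun _ _ => norm_nonneg _
    positivity
  -- the primitive F and its continuity
  set F : ℝ → ℝ := fun x => ∫ r in (0:ℝ)..x, ‖φ r‖ with hF_def
  have hFc : ContinuousOn F (Icc 0 T) := by
    have hi : IntegrableOn (fun r => ‖φ r‖) (uIcc 0 T) volume := by
      rw [uIcc_of_le hT]
      exact (intervalIntegrable_iff_integrableOn_Icc_of_le hT).mp hφ_int
    have := intervalIntegral.continuousOn_primitive_interval hi
    rwa [uIcc_of_le hT] at this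
  have hFsplit : ∀ θ t : ℝ, 0 ≤ θ → θ ≤ t → t ≤ T →
      (∫ r in θ..t, ‖φ r‖) = F t - F θ := by
    intro θ t h0 hθt htT
    have hadd := intervalIntegral.integral_add_adjacent_intervals
      (hφ_sub 0 θ le_rfl h0 (hθt.trans htT)) (hφ_sub θ t h0 hθt htT)
    rw [hF_def]; simp only; linarith
  have hFnonneg : ∀ θ t : ℝ, θ ≤ t → 0 ≤ ∫ r in θ..t, ‖φ r‖ :=
    fun θ t h => intervalIntegral.integral_nonneg h fun _ _ => norm_nonneg _
  constructor
  · -- weak continuity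
    intro ξ
    rw [Metric.continuousOn_iff]
    intro s₀ hs₀ ε hε
    set δ₁ : ℝ := ε / (2 * (c₀ * M + 1)) with hδ₁_def
    have hδ₁ : 0 < δ₁ := by positivity
    obtain ⟨η₁, hη₁, H₁⟩ := key (fun _ _ => ξ) ‖ξ‖ (fun _ _ => le_rfl) δ₁ hδ₁
    set δ₂ : ℝ := ε / (2 * (c₀ * ‖ξ‖ + 1)) with hδ₂_def
    have hδ₂ : 0 < δ₂ := by positivity
    obtain ⟨η₂, hη₂, H₂⟩ := (Metric.continuousWithinAt_iff).mp (hFc s₀ hs₀) δ₂ hδ₂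
    refine ⟨min η₁ η₂, lt_min hη₁ hη₂, ?_⟩
    intro s hs hd
    have hd1 : dist s s₀ < η₁ := lt_of_lt_of_le hd (min_le_left _ _)
    have hd2 : dist s s₀ < η₂ := lt_of_lt_of_le hd (min_le_right _ _)
    have hF2 := H₂ hs hd2
    rw [Real.dist_eq] at hF2 hd1
    have habs := abs_lt.mp hd1
    -- order the two points
    have main : ∀ θ t : ℝ, θ ∈ Icc 0 T → t ∈ Icc 0 T → θ ≤ t → t - θ < η₁ →
        (∫ r in θ..t, ‖φ r‖) < δ₂ →
        |(inner ℝ (v t - v θ) ξ : ℝ)| < ε := by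
      intro θ t hθm htm hθt hlt hFs
      have hb := hkey θ t ξ hθm.1 hθt htm.2
      have h1 : ‖v t‖ * ‖ξ - Lstar θ t ξ‖ < (c₀ * M + 1) * δ₁ := by
        have hL := H₁ θ t hθm.1 hθt htm.2 hlt
        rw [norm_sub_rev] at hL
        calc ‖v t‖ * ‖ξ - Lstar θ t ξ‖ ≤ (c₀ * M) * ‖ξ - Lstar θ t ξ‖ :=
              mul_le_mul_of_nonneg_right (hvnorm t htm) (norm_nonneg _)
          _ ≤ (c₀ * M) * δ₁ := mul_le_mul_of_nonneg_left hL.le (by positivity)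
          _ < (c₀ * M + 1) * δ₁ := by nlinarith
      have h2 : c₀ * ‖ξ‖ * (∫ r in θ..t, ‖φ r‖) < (c₀ * ‖ξ‖ + 1) * δ₂ := by
        have hnn := hFnonneg θ t hθt
        nlinarith [mul_nonneg hc₀ (norm_nonneg ξ)]
      have e1 : (c₀ * M + 1) * δ₁ = ε / 2 := by
        have hne : c₀ * M + 1 ≠ 0 := by positivity
        rw [hδ₁_def]; field_simp
      have e2 : (c₀ * ‖ξ‖ + 1) * δ₂ = ε / 2 := by
        have hne : c₀ * ‖ξ‖ + 1 ≠ 0 := by positivity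
        rw [hδ₂_def]; field_simp
      linarith
    have goal_eq : dist ((fun s => (inner ℝ ξ (v s) : ℝ)) s) ((fun s => (inner ℝ ξ (v s) : ℝ)) s₀) =
        |(inner ℝ (v s - v s₀) ξ : ℝ)| := by
      rw [Real.dist_eq, ← inner_sub_right, real_inner_comm]
    rw [goal_eq]
    rcases le_total s s₀ with h | h
    · have : |(inner ℝ (v s - v s₀) ξ : ℝ)| = |(inner ℝ (v s₀ - v s) ξ : ℝ)| := by
        rw [← abs_neg, ← inner_neg_left, neg_sub]
      rw [this]
      refine main s s₀ hs hs₀ h (by linarith) ?_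
      rw [hFsplit s s₀ hs.1 h hs₀.2]
      calc F s₀ - F s ≤ |F s - F s₀| := by rw [abs_sub_comm]; exact le_abs_self _
        _ < δ₂ := hF2
    · refine main s₀ s hs₀ hs h (by linarith) ?_
      rw [hFsplit s₀ s hs₀.1 h hs.2]
      calc F s - F s₀ ≤ |F s - F s₀| := le_abs_self _
        _ < δ₂ := hF2
  · -- strong left continuity
    intro t ht
    have htm : t ∈ Icc (0:ℝ) T := ⟨ht.1.le, ht.2⟩
    rw [Metric.tendsto_nhdsWithin_nhds]
    intro ε hε
    set K : ℝ := 2 * (c₀ * M) with hK_def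
    have hK : 0 ≤ K := by positivity
    set u : ℝ → ℝ → Lp ℝ 2 (volume.restrict D) :=
      fun a b => if a ∈ Icc (0:ℝ) T ∧ b ∈ Icc (0:ℝ) T then v b - v a else 0 with hu_def
    have hu : ∀ a b, ‖u a b‖ ≤ K := by
      intro a b
      by_cases h : a ∈ Icc (0:ℝ) T ∧ b ∈ Icc (0:ℝ) T
      · rw [show u a b = v b - v a from if_pos h]
        calc ‖v b - v a‖ ≤ ‖v b‖ + ‖v a‖ := norm_sub_le _ _
          _ ≤ c₀ * M + c₀ * M := add_le_add (hvnorm b h.2) (hvnorm a h.1)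
          _ = K := by rw [hK_def]; ring
      · rw [show u a b = (0 : Lp ℝ 2 (volume.restrict D)) from if_neg h, norm_zero]
        exact hK
    set δ₁ : ℝ := ε ^ 2 / (2 * (c₀ * M + 1)) with hδ₁_def
    have hδ₁ : 0 < δ₁ := by positivity
    obtain ⟨η₁, hη₁, H₁⟩ := key u K hu δ₁ hδ₁
    set δ₂ : ℝ := ε ^ 2 / (2 * (c₀ * K + 1)) with hδ₂_def
    have hδ₂ : 0 < δ₂ := by positivity
    obtain ⟨η₂, hη₂, H₂⟩ := (Metric.continuousWithinAt_iff).mp (hFc t htm) δ₂ hδ₂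
    refine ⟨min η₁ η₂, lt_min hη₁ hη₂, ?_⟩
    intro θ hθ hd
    have hθm : θ ∈ Icc (0:ℝ) T := ⟨hθ.1, hθ.2.le.trans ht.2⟩
    have hθt : θ ≤ t := hθ.2.le
    have hd1 : dist θ t < η₁ := lt_of_lt_of_le hd (min_le_left _ _)
    have hd2 : dist θ t < η₂ := lt_of_lt_of_le hd (min_le_right _ _)
    rw [Real.dist_eq] at hd1
    have habs := abs_lt.mp hd1
    set ρ : Lp ℝ 2 (volume.restrict D) := v t - v θ with hρ_def
    have huθt : u θ t = ρ := if_pos ⟨hθm, htm⟩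
    have hρK : ‖ρ‖ ≤ K := by rw [← huθt]; exact hu θ t
    have hL : ‖Lstar θ t ρ - ρ‖ < δ₁ := by
      have := H₁ θ t hθ.1 hθt ht.2 (by linarith)
      rwa [huθt] at this
    have hF2 := H₂ hθm hd2
    rw [Real.dist_eq] at hF2
    have hFsmall : (∫ r in θ..t, ‖φ r‖) < δ₂ := by
      rw [hFsplit θ t hθ.1 hθt ht.2]
      calc F t - F θ ≤ |F θ - F t| := by rw [abs_sub_comm]; exact le_abs_self _
        _ < δ₂ := hF2
    have hb := hkey θ t ρ hθ.1 hθt ht.2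
    have hsq : ‖ρ‖ ^ 2 ≤ ‖v t‖ * ‖ρ - Lstar θ t ρ‖ + c₀ * ‖ρ‖ * ∫ r in θ..t, ‖φ r‖ := by
      have : |(inner ℝ (v t - v θ) ρ : ℝ)| = ‖ρ‖ ^ 2 := by
        rw [← hρ_def, real_inner_self_eq_norm_sq, abs_of_nonneg (sq_nonneg _)]
      rw [this] at hb; exact hb
    have h1 : ‖v t‖ * ‖ρ - Lstar θ t ρ‖ < (c₀ * M + 1) * δ₁ := by
      rw [norm_sub_rev]
      calc ‖v t‖ * ‖Lstar θ t ρ - ρ‖ ≤ (c₀ * M) * ‖Lstar θ t ρ - ρ‖ :=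
            mul_le_mul_of_nonneg_right (hvnorm t htm) (norm_nonneg _)
        _ ≤ (c₀ * M) * δ₁ := mul_le_mul_of_nonneg_left hL.le (by positivity)
        _ < (c₀ * M + 1) * δ₁ := by nlinarith
    have h2 : c₀ * ‖ρ‖ * (∫ r in θ..t, ‖φ r‖) < (c₀ * K + 1) * δ₂ := by
      have hnn := hFnonneg θ t hθt
      have hcρ : c₀ * ‖ρ‖ ≤ c₀ * K := mul_le_mul_of_nonneg_left hρK hc₀
      nlinarith [mul_nonneg hc₀ (norm_nonneg ρ)]
    have e1 : (c₀ * M + 1) * δ₁ = ε ^ 2 / 2 := by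
      have hne : c₀ * M + 1 ≠ 0 := by positivity
      rw [hδ₁_def]; field_simp
    have e2 : (c₀ * K + 1) * δ₂ = ε ^ 2 / 2 := by
      have hne : c₀ * K + 1 ≠ 0 := by positivity
      rw [hδ₂_def]; field_simp
    have hfin : ‖ρ‖ ^ 2 < ε ^ 2 := by linarith
    have hρε : ‖ρ‖ < ε := lt_of_pow_lt_pow_left₀ 2 hε.le hfin
    simp only [Real.dist_eq, sub_zero]
    rw [abs_of_nonneg (norm_nonneg _)]
    exact hρε
end
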